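/- Let H be positive self-adjoint and W(t) a symmetric operator such that ‖H^p W(t) H^{-p-ν}‖ ≤ R for all 0 ≤ p ≤ n, where 0 ≤ ν < 1 and R > 0. Then for every z not in σ(H) with R·‖H^ν(H−z)^{-1}‖ ≤ 1/2, z is in the resolvent set of H+W(t), and for every integer 0 ≤ p ≤ n and real 0 ≤ θ ≤ 1: ‖H^{p+θ}(H+W(t)−z)^{-1}H^{-p}‖ ≤ 2‖H^θ(H−z)^{-1}‖. -/
import Mathlib

private lemma my_ring_inverse_eq {M : Type*} [MonoidWithZero M] {a b : M}
    (h1 : a * b = 1) (h2 : b * a = 1) : Ring.inverse a = b := by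
  have h : a = ((⟨a, b, h1, h2⟩ : Mˣ) : M) := rfl
  rw [h, Ring.inverse_unit]; rfl

private lemma my_neumann {A : Type*} [NormedRing A] [CompleteSpace A]
    (h1 : ‖(1 : A)‖ ≤ 1) {b : A} (hb : ‖b‖ ≤ 1/2) :
    IsUnit (1 + b) ∧ ‖Ring.inverse (1 + b)‖ ≤ 2 := by
  have hlt : ‖-b‖ < 1 := by rw [norm_neg]; linarith
  have hu : IsUnit (1 + b) := by
    have h := isUnit_one_sub_of_norm_lt_one hlt
    rwa [sub_neg_eq_add] at h
  refine ⟨hu, ?_⟩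
  have hv1 : (1 + b) * Ring.inverse (1 + b) = 1 := Ring.mul_inverse_cancel _ hu
  set v := Ring.inverse (1 + b) with hvdef
  have hveq : v = 1 - b * v := by
    rw [eq_sub_iff_add_eq]
    rw [add_mul, one_mul] at hv1
    exact hv1
  have hbv : ‖b * v‖ ≤ 1/2 * ‖v‖ := le_trans (norm_mul_le _ _)
    (mul_le_mul_of_nonneg_right hb (norm_nonneg _))
  have hn : ‖v‖ ≤ 1 + 1/2 * ‖v‖ := by
    calc ‖v‖ = ‖1 - b * v‖ := by rw [← hveq]
    _ ≤ ‖(1:A)‖ + ‖b * v‖ := norm_sub_le _ _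
    _ ≤ 1 + 1/2 * ‖v‖ := add_le_add h1 hbv
  linarith

set_option maxHeartbeats 2000000 in
/-- Sandwiched resolvent estimate for `H + W` with an `H^ν`-bounded
symmetric perturbation `W` (`0 ≤ ν < 1`): if `R·‖H^ν(H−z)⁻¹‖ ≤ 1/2` then `z` is in the
resolvent set of `H + W` and
`‖H^{p+θ}(H+W−z)⁻¹H^{-p}‖ ≤ 2 ‖H^θ(H−z)⁻¹‖` for `0 ≤ p ≤ n`, `0 ≤ θ ≤ 1`. -/
theorem sandwiched_resolvent_estimate
    {E : Type*} [NormedAddCommGroup E] [InnerProductSpace ℂ E] [CompleteSpace E]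
    (H : E →L[ℂ] E) (hsa : IsSelfAdjoint H)
    (hpos : ∀ x ∈ spectrum ℝ H, (0:ℝ) < x)
    (W : E →L[ℂ] E) (hWsa : IsSelfAdjoint W)
    (n : ℕ) (ν R : ℝ) (hν0 : 0 ≤ ν) (hν1 : ν < 1) (hR : 0 < R)
    (hWb : ∀ p : ℕ, p ≤ n →
      ‖cfc (fun x : ℝ => x ^ (p:ℝ)) H * W * cfc (fun x : ℝ => x ^ (-(p:ℝ) - ν)) H‖ ≤ R)
    (z : ℂ) (hz : z ∉ spectrum ℂ H)
    (hsmall : R * ‖cfc (fun x : ℝ => x ^ ν) H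
        * Ring.inverse (H - algebraMap ℂ (E →L[ℂ] E) z)‖ ≤ 1/2) :
    IsUnit (H + W - algebraMap ℂ (E →L[ℂ] E) z) ∧
    ∀ p : ℕ, p ≤ n → ∀ θ : ℝ, 0 ≤ θ → θ ≤ 1 →
      ‖cfc (fun x : ℝ => x ^ ((p:ℝ) + θ)) H
          * Ring.inverse (H + W - algebraMap ℂ (E →L[ℂ] E) z)
          * cfc (fun x : ℝ => x ^ (-(p:ℝ))) H‖
        ≤ 2 * ‖cfc (fun x : ℝ => x ^ θ) H
          * Ring.inverse (H - algebraMap ℂ (E →L[ℂ] E) z)‖ := by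
  set u := H - algebraMap ℂ (E →L[ℂ] E) z with hu_def
  set P := Ring.inverse u with hP_def
  have h1le : ‖(1 : E →L[ℂ] E)‖ ≤ 1 := ContinuousLinearMap.norm_id_le
  have hc : ∀ r : ℝ, ContinuousOn (fun x : ℝ => x ^ r) (spectrum ℝ H) := fun r x hx =>
    (Real.continuousAt_rpow_const x r (Or.inl (hpos x hx).ne')).continuousWithinAt
  have hmul : ∀ r s : ℝ, cfc (fun x : ℝ => x ^ r) H * cfc (fun x : ℝ => x ^ s) H
      = cfc (fun x : ℝ => x ^ (r + s)) H := by
    intro r s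
    rw [← cfc_mul _ _ H (hc r) (hc s)]
    exact cfc_congr fun x hx => (Real.rpow_add (hpos x hx) r s).symm
  have h0 : cfc (fun x : ℝ => x ^ (0:ℝ)) H = 1 := by
    rw [show (fun x : ℝ => x ^ (0:ℝ)) = fun _ => (1:ℝ) from funext fun x => Real.rpow_zero x]
    exact cfc_const_one ℝ H
  have hcommH : ∀ r : ℝ, Commute (cfc (fun x : ℝ => x ^ r) H) H := by
    intro r
    have h : cfc (fun x : ℝ => x ^ r) H * cfc (fun x : ℝ => x) H
        = cfc (fun x : ℝ => x) H * cfc (fun x : ℝ => x ^ r) H := by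
      rw [← cfc_mul _ _ H (hc r) continuous_id'.continuousOn,
        ← cfc_mul _ _ H continuous_id'.continuousOn (hc r)]
      exact cfc_congr fun x _ => mul_comm _ _
    rw [cfc_id' ℝ H] at h
    exact h
  have hu_isunit : IsUnit u := by
    have h := (spectrum.notMem_iff.mp hz).neg
    rwa [neg_sub] at h
  have hu_comm : ∀ r : ℝ, Commute (cfc (fun x : ℝ => x ^ r) H) u :=
    fun r => (hcommH r).sub_right (Algebra.commutes z _).symm
  have hPcomm : ∀ r : ℝ, Commute (cfc (fun x : ℝ => x ^ r) H) P := by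
    intro r
    obtain ⟨U, hU⟩ := hu_isunit
    rw [hP_def, ← hU, Ring.inverse_unit]
    exact Commute.units_inv_right (hU ▸ hu_comm r)
  have hPu : P * u = 1 := Ring.inverse_mul_cancel _ hu_isunit
  have huP : u * P = 1 := Ring.mul_inverse_cancel _ hu_isunit
  have cancel : ∀ (a b : E →L[ℂ] E), a * b = 1 → ∀ x : E →L[ℂ] E, a * (b * x) = x :=
    fun a b h x => by rw [← mul_assoc, h, one_mul]
  have hmul' : ∀ r s : ℝ, ∀ x : E →L[ℂ] E,
      cfc (fun t : ℝ => t ^ r) H * (cfc (fun t : ℝ => t ^ s) H * x)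
        = cfc (fun t : ℝ => t ^ (r + s)) H * x :=
    fun r s x => by rw [← mul_assoc, hmul]
  have hinv1 : ∀ r : ℝ, cfc (fun x : ℝ => x ^ r) H * cfc (fun x : ℝ => x ^ (-r)) H = 1 := by
    intro r
    rw [hmul, show r + -r = (0:ℝ) by ring, h0]
  have hinv2 : ∀ r : ℝ, cfc (fun x : ℝ => x ^ (-r)) H * cfc (fun x : ℝ => x ^ r) H = 1 := by
    intro r
    rw [hmul, show -r + r = (0:ℝ) by ring, h0]
  have hPcomm' : ∀ (r : ℝ) (x : E →L[ℂ] E),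
      P * (cfc (fun t : ℝ => t ^ r) H * x) = cfc (fun t : ℝ => t ^ r) H * (P * x) :=
    fun r x => by rw [← mul_assoc, ← (hPcomm r).eq, mul_assoc]
  -- the key smallness bound
  have key : ∀ p : ℕ, p ≤ n →
      ‖cfc (fun x : ℝ => x ^ (p:ℝ)) H * W * P * cfc (fun x : ℝ => x ^ (-(p:ℝ))) H‖ ≤ 1/2 := by
    intro p hp
    have hsw : P * cfc (fun x : ℝ => x ^ (-(p:ℝ))) H
        = cfc (fun x : ℝ => x ^ (-(p:ℝ) - ν)) H * (cfc (fun x : ℝ => x ^ ν) H * P) := by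
      rw [← mul_assoc, hmul, show -(p:ℝ) - ν + ν = -(p:ℝ) by ring]
      exact ((hPcomm (-(p:ℝ))).eq).symm
    have e : cfc (fun x : ℝ => x ^ (p:ℝ)) H * W * P * cfc (fun x : ℝ => x ^ (-(p:ℝ))) H
        = (cfc (fun x : ℝ => x ^ (p:ℝ)) H * W * cfc (fun x : ℝ => x ^ (-(p:ℝ) - ν)) H)
          * (cfc (fun x : ℝ => x ^ ν) H * P) := by
      simp only [mul_assoc]
      rw [hsw]
    rw [e]
    calc ‖(cfc (fun x : ℝ => x ^ (p:ℝ)) H * W * cfc (fun x : ℝ => x ^ (-(p:ℝ) - ν)) H)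
          * (cfc (fun x : ℝ => x ^ ν) H * P)‖
        ≤ ‖cfc (fun x : ℝ => x ^ (p:ℝ)) H * W * cfc (fun x : ℝ => x ^ (-(p:ℝ) - ν)) H‖
          * ‖cfc (fun x : ℝ => x ^ ν) H * P‖ := norm_mul_le _ _
      _ ≤ R * ‖cfc (fun x : ℝ => x ^ ν) H * P‖ :=
          mul_le_mul_of_nonneg_right (hWb p hp) (norm_nonneg _)
      _ ≤ 1/2 := hsmall
  -- invertibility of 1 + W * P
  have hWP : ‖W * P‖ ≤ 1/2 := by
    have h := key 0 (Nat.zero_le n)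
    simp only [Nat.cast_zero, neg_zero, h0, one_mul, mul_one] at h
    exact h
  obtain ⟨hU1, hN1⟩ := my_neumann h1le hWP
  have hfact : H + W - algebraMap ℂ (E →L[ℂ] E) z = (1 + W * P) * u := by
    rw [add_mul, one_mul, mul_assoc, hPu, mul_one, hu_def]
    abel
  have hHWz_unit : IsUnit (H + W - algebraMap ℂ (E →L[ℂ] E) z) := by
    rw [hfact]; exact hU1.mul hu_isunit
  refine ⟨hHWz_unit, ?_⟩
  intro p hp θ hθ0 hθ1
  set Bp := cfc (fun x : ℝ => x ^ (p:ℝ)) H * W * P * cfc (fun x : ℝ => x ^ (-(p:ℝ))) H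
    with hBp
  have hBple : ‖Bp‖ ≤ 1/2 := by rw [hBp]; exact key p hp
  obtain ⟨hUp, hNp⟩ := my_neumann h1le hBple
  have hVu : (1 + Bp) * Ring.inverse (1 + Bp) = 1 := Ring.mul_inverse_cancel _ hUp
  have huV : Ring.inverse (1 + Bp) * (1 + Bp) = 1 := Ring.inverse_mul_cancel _ hUp
  have hsw1 : (1 + W * P) * cfc (fun x : ℝ => x ^ (-(p:ℝ))) H
      = cfc (fun x : ℝ => x ^ (-(p:ℝ))) H * (1 + Bp) := by
    rw [add_mul, one_mul, mul_add, mul_one, hBp]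
    congr 1
    simp only [mul_assoc]
    rw [cancel _ _ (hinv2 (p:ℝ))]
  have hsw2 : cfc (fun x : ℝ => x ^ (p:ℝ)) H * (1 + W * P)
      = (1 + Bp) * cfc (fun x : ℝ => x ^ (p:ℝ)) H := by
    rw [mul_add, mul_one, add_mul, one_mul, hBp]
    congr 1
    simp only [mul_assoc]
    rw [hinv2 (p:ℝ), mul_one]
  have hswap1 : ∀ x : E →L[ℂ] E, (1 + W * P) * (cfc (fun t : ℝ => t ^ (-(p:ℝ))) H * x)
      = cfc (fun t : ℝ => t ^ (-(p:ℝ))) H * ((1 + Bp) * x) :=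
    fun x => by rw [← mul_assoc, hsw1, mul_assoc]
  have hswap2 : ∀ x : E →L[ℂ] E, cfc (fun t : ℝ => t ^ (p:ℝ)) H * ((1 + W * P) * x)
      = (1 + Bp) * (cfc (fun t : ℝ => t ^ (p:ℝ)) H * x) :=
    fun x => by rw [← mul_assoc, hsw2, mul_assoc]
  have hmain : Ring.inverse (H + W - algebraMap ℂ (E →L[ℂ] E) z)
      = P * (cfc (fun x : ℝ => x ^ (-(p:ℝ))) H
          * (Ring.inverse (1 + Bp) * cfc (fun x : ℝ => x ^ (p:ℝ)) H)) := by
    apply my_ring_inverse_eq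
    · rw [hfact]
      simp only [mul_assoc]
      rw [cancel _ _ huP, hswap1, cancel _ _ hVu]
      exact hinv2 _
    · rw [hfact]
      simp only [mul_assoc]
      rw [hswap2, cancel _ _ huV, cancel _ _ (hinv2 _)]
      exact hPu
  rw [hmain]
  have efin : cfc (fun x : ℝ => x ^ ((p:ℝ) + θ)) H
      * (P * (cfc (fun x : ℝ => x ^ (-(p:ℝ))) H
          * (Ring.inverse (1 + Bp) * cfc (fun x : ℝ => x ^ (p:ℝ)) H)))
      * cfc (fun x : ℝ => x ^ (-(p:ℝ))) H
      = cfc (fun x : ℝ => x ^ θ) H * (P * Ring.inverse (1 + Bp)) := by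
    simp only [mul_assoc]
    rw [hinv1, mul_one, hPcomm', hmul', show (p:ℝ) + θ + -(p:ℝ) = θ by ring]
  rw [efin]
  calc ‖cfc (fun x : ℝ => x ^ θ) H * (P * Ring.inverse (1 + Bp))‖
      = ‖cfc (fun x : ℝ => x ^ θ) H * P * Ring.inverse (1 + Bp)‖ := by rw [mul_assoc]
    _ ≤ ‖cfc (fun x : ℝ => x ^ θ) H * P‖ * ‖Ring.inverse (1 + Bp)‖ := norm_mul_le _ _
    _ ≤ ‖cfc (fun x : ℝ => x ^ θ) H * P‖ * 2 :=
        mul_le_mul_of_nonneg_left hNp (norm_nonneg _)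
    _ = 2 * ‖cfc (fun x : ℝ => x ^ θ) H * P‖ := mul_comm _ _
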